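/- Let 1 ≤ m ≤ n. Then either Γ_+^m ⊂ Γ or Γ_+^m ∩ Γ = ∅. -/

import Mathlib

noncomputable section

/-- `ℝ^n` with the Euclidean norm. -/
abbrev EV (n : ℕ) := EuclideanSpace ℝ (Fin n)

/-- The positive cone `ℝ^n_+`. -/
def posCone (n : ℕ) : Set (EV n) := {x | ∀ i, 0 < x i}

/-- `Γ_+^m`: nonnegative vectors with exactly `m` positive coordinates (the remaining
`n - m` coordinates vanish); equivalently, all permutations of `(0,…,0,λ₁,…,λ_m)`
with every `λ_i > 0`. -/
def gammaPlus (n m : ℕ) : Set (EV n) :=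
  {x | (∀ i, 0 ≤ x i) ∧ (Finset.univ.filter fun i => 0 < x i).card = m}

/-- Invariance under permutations of coordinates. -/
def PermSymm {n : ℕ} (Γ : Set (EV n)) : Prop :=
  ∀ (σ : Equiv.Perm (Fin n)) (x : EV n), x ∈ Γ → (WithLp.toLp 2 (fun i => x (σ i)) : EV n) ∈ Γ

/-- `Γ` is a cone. -/
def IsConeSet {n : ℕ} (Γ : Set (EV n)) : Prop :=
  ∀ c : ℝ, 0 < c → ∀ x ∈ Γ, c • x ∈ Γ

/-- A convex cone is closed under addition. -/
lemma add_mem_of_cone {n : ℕ} {Γ : Set (EV n)} (hΓc : Convex ℝ Γ)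
    (hΓcone : IsConeSet Γ) {a b : EV n} (ha : a ∈ Γ) (hb : b ∈ Γ) : a + b ∈ Γ := by
  have h := hΓc ha hb (by norm_num : (0:ℝ) ≤ 1/2) (by norm_num : (0:ℝ) ≤ 1/2) (by norm_num)
  have h2 := hΓcone 2 (by norm_num) _ h
  have h3 : (2:ℝ) • ((1/2:ℝ) • a + (1/2:ℝ) • b) = a + b := by
    rw [smul_add, smul_smul, smul_smul]; norm_num
  rwa [h3] at h2

/-- An open convex cone containing the positive cone is closed under adding
coordinatewise-nonnegative vectors. -/
lemma add_nonneg_mem {n : ℕ} {Γ : Set (EV n)} (hΓo : IsOpen Γ) (hΓc : Convex ℝ Γ)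
    (hΓcone : IsConeSet Γ) (hΓpos : posCone n ⊆ Γ) {a q : EV n} (ha : a ∈ Γ)
    (hq : ∀ i, 0 ≤ q i) : a + q ∈ Γ := by
  obtain ⟨δ, hδ, hball⟩ := Metric.isOpen_iff.mp hΓo a ha
  set u : EV n := WithLp.toLp 2 (fun _ => (1:ℝ)) with hu
  set δ' : ℝ := δ / (2 * (‖u‖ + 1)) with hδ'
  have hun : (0:ℝ) < ‖u‖ + 1 := by positivity
  have hδ'pos : 0 < δ' := by positivity
  have ha' : a - δ' • u ∈ Γ := by
    apply hball
    simp only [Metric.mem_ball, dist_eq_norm]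
    have h1 : a - δ' • u - a = -(δ' • u) := by abel
    rw [h1, norm_neg, norm_smul, Real.norm_eq_abs, abs_of_pos hδ'pos]
    calc δ' * ‖u‖ < δ' * (‖u‖ + 1) := by nlinarith
      _ = δ / 2 := by rw [hδ']; field_simp
      _ < δ := by linarith
  have hp : q + δ' • u ∈ posCone n := by
    intro i
    have h2 : (q + δ' • u) i = q i + δ' * 1 := by simp [hu]
    rw [h2]
    have := hq i
    linarith
  have h4 := add_mem_of_cone hΓc hΓcone ha' (hΓpos hp)
  have heq : a - δ' • u + (q + δ' • u) = a + q := by abel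
  rwa [heq] at h4

/-- For `1 ≤ m ≤ n`, either `Γ_+^m ⊆ Γ` or `Γ_+^m ∩ Γ = ∅`. -/
theorem stmt0 (n : ℕ) (hn : 2 ≤ n) (Γ : Set (EV n))
    (hΓo : IsOpen Γ) (hΓs : PermSymm Γ) (hΓc : Convex ℝ Γ)
    (hΓcone : IsConeSet Γ) (hΓpos : posCone n ⊆ Γ)
    (m : ℕ) (hm1 : 1 ≤ m) (hm2 : m ≤ n) :
    gammaPlus n m ⊆ Γ ∨ gammaPlus n m ∩ Γ = ∅ := by
  by_cases hne : gammaPlus n m ∩ Γ = ∅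
  · exact Or.inr hne
  left
  obtain ⟨x, hxg, hxΓ⟩ := Set.nonempty_iff_ne_empty.mpr hne
  obtain ⟨hx0, hxm⟩ := hxg
  intro y hyg
  obtain ⟨hy0, hym⟩ := hyg
  have hcard : Fintype.card {i : Fin n // 0 < y i} = Fintype.card {i : Fin n // 0 < x i} := by
    rw [Fintype.card_subtype, Fintype.card_subtype, hxm, hym]
  set e : {i : Fin n // 0 < y i} ≃ {i : Fin n // 0 < x i} := Fintype.equivOfCardEq hcard with he
  set σ : Equiv.Perm (Fin n) := e.extendSubtype with hσ
  set x' : EV n := WithLp.toLp 2 (fun i => x (σ i)) with hx'def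
  have hx'Γ : x' ∈ Γ := hΓs σ x hxΓ
  have hzero : ∀ i, ¬ 0 < y i → x' i = 0 := fun i hi =>
    le_antisymm (not_lt.mp (e.extendSubtype_not_mem i hi)) (hx0 (σ i))
  have hposx' : ∀ i, 0 < y i → 0 < x' i := fun i hi => e.extendSubtype_mem i hi
  -- choose scaling constant
  set T : Finset (Fin n) := Finset.univ.filter (fun i => 0 < y i) with hT
  have hTne : T.Nonempty := by
    rw [← Finset.card_pos, hT, hym]; omega
  have hTine : (T.image fun i => y i / x' i).Nonempty := hTne.image _
  set c : ℝ := (T.image fun i => y i / x' i).min' hTine with hc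
  have hcpos : 0 < c := by
    obtain ⟨j, hj, hjc⟩ := Finset.mem_image.mp ((T.image fun i => y i / x' i).min'_mem hTine)
    rw [hc, ← hjc]
    have hjy : 0 < y j := (Finset.mem_filter.mp hj).2
    exact div_pos hjy (hposx' j hjy)
  have hle : ∀ i, c * x' i ≤ y i := by
    intro i
    by_cases hi : 0 < y i
    · have hiT : i ∈ T := Finset.mem_filter.mpr ⟨Finset.mem_univ i, hi⟩
      have hmin : c ≤ y i / x' i :=
        Finset.min'_le _ _ (Finset.mem_image_of_mem _ hiT)
      have hx'i := hposx' i hi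
      calc c * x' i ≤ (y i / x' i) * x' i := by nlinarith
        _ = y i := by field_simp
    · rw [hzero i hi, mul_zero]; exact hy0 i
  set q : EV n := y - c • x' with hq
  have hqnn : ∀ i, 0 ≤ q i := by
    intro i
    have h1 : q i = y i - c * x' i := by simp [hq]
    rw [h1]; linarith [hle i]
  have hcx' : c • x' ∈ Γ := hΓcone c hcpos x' hx'Γ
  have := add_nonneg_mem hΓo hΓc hΓcone hΓpos hcx' hqnn
  have heq : c • x' + q = y := by rw [hq]; abel
  rwa [heq] at this
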